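/- Let Q be an irreducible n×n Q-matrix with invariant probability vector π and second eigenvalue modulus |μ₂| < 1 for K = Q/a + I (a > max_i(−Q_{ii})). Then for any probability vector ρ₀, the continuous-time solution ρ(t)ᵀ = ρ₀ᵀ e^{Qt} satisfies ‖ρ(t) − π‖_{ℓ¹} ≤ C e^{(a t/2)(|μ₂|−1)} ‖ρ₀‖_{ℓ¹}, i.e. exponential convergence to the invariant measure with explicit rate a(1−|μ₂|)/2. -/

import Mathlib

open scoped Matrix ENNReal NNReal

/-- Uniqueness of invariant measure: nonpositivity part. -/
lemma perron_le_zero {n : ℕ} (K : Matrix (Fin n) (Fin n) ℝ)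
    (hK : ∀ i j, 0 ≤ K i j) (hKrow : ∀ i, ∑ j, K i j = 1)
    (hconn : ∀ i j : Fin n, Relation.ReflTransGen (fun a b => a ≠ b ∧ 0 < K a b) i j)
    (u : Fin n → ℝ) (hinv : ∀ j, ∑ i, u i * K i j = u j) (hsum : ∑ i, u i = 0) :
    ∀ i, u i ≤ 0 := by
  set p : Fin n → ℝ := fun i => max (u i) 0 with hp
  have hpnn : ∀ i, 0 ≤ p i := fun i => le_max_right _ _
  have hple : ∀ j, p j ≤ ∑ i, p i * K i j := by
    intro j
    refine max_le ?_ (Finset.sum_nonneg fun i _ => mul_nonneg (hpnn i) (hK i j))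
    rw [← hinv j]
    exact Finset.sum_le_sum fun i _ => mul_le_mul_of_nonneg_right (le_max_left _ _) (hK i j)
  have hsumeq : ∑ j, ∑ i, p i * K i j = ∑ i, p i := by
    rw [Finset.sum_comm]
    simp_rw [← Finset.mul_sum, hKrow, mul_one]
  have hpeq : ∀ j, ∑ i, p i * K i j = p j := by
    have h0 : ∑ j, ((∑ i, p i * K i j) - p j) = 0 := by
      rw [Finset.sum_sub_distrib, hsumeq, sub_self]
    intro j
    have := (Finset.sum_eq_zero_iff_of_nonneg (fun i _ => sub_nonneg.mpr (hple i))).mp h0 j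
      (Finset.mem_univ j)
    linarith
  -- positivity propagation
  have hprop : ∀ i j : Fin n, Relation.ReflTransGen (fun a b => a ≠ b ∧ 0 < K a b) i j →
      0 < p i → 0 < p j := by
    intro i j hij hpi
    induction hij with
    | refl => exact hpi
    | tail hbc hstep ih =>
      rename_i b c
      have hb := ih
      calc (0:ℝ) < p b * K b c := mul_pos hb hstep.2
        _ ≤ ∑ i, p i * K i c :=
          Finset.single_le_sum (fun i _ => mul_nonneg (hpnn i) (hK i c)) (Finset.mem_univ b)
        _ = p c := hpeq c
  by_contra hcon
  push_neg at hcon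
  obtain ⟨i, hi⟩ := hcon
  have hall : ∀ j, 0 < u j := by
    intro j
    have := hprop i j (hconn i j) (by simp [hp]; exact hi)
    simpa [hp, lt_max_iff] using this
  have : 0 < ∑ i, u i := Finset.sum_pos (fun j _ => hall j) ⟨i, Finset.mem_univ i⟩
  linarith

lemma perron_eq_zero {n : ℕ} (K : Matrix (Fin n) (Fin n) ℝ)
    (hK : ∀ i j, 0 ≤ K i j) (hKrow : ∀ i, ∑ j, K i j = 1)
    (hconn : ∀ i j : Fin n, Relation.ReflTransGen (fun a b => a ≠ b ∧ 0 < K a b) i j)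
    (u : Fin n → ℝ) (hinv : ∀ j, ∑ i, u i * K i j = u j) (hsum : ∑ i, u i = 0) :
    u = 0 := by
  have h1 := perron_le_zero K hK hKrow hconn u hinv hsum
  have h2 := perron_le_zero K hK hKrow hconn (-u)
    (fun j => by simp [neg_mul, Finset.sum_neg_distrib, hinv j])
    (by simp [hsum])
  funext i
  have h3 := h2 i
  simp only [Pi.neg_apply, neg_nonpos] at h3
  exact le_antisymm (h1 i) (by simpa using h3)

/-- Spectrum of the deflated matrix. -/
lemma deflated_spec {n : ℕ} (K : Matrix (Fin n) (Fin n) ℝ) (π : Fin n → ℝ)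
    (hK : ∀ i j, 0 ≤ K i j) (hKrow : ∀ i, ∑ j, K i j = 1)
    (hconn : ∀ i j : Fin n, Relation.ReflTransGen (fun a b => a ≠ b ∧ 0 < K a b) i j)
    (hπsum : ∑ i, π i = 1)
    (μ₂ : ℝ) (hμ₂nonneg : 0 ≤ μ₂)
    (hspec : ∀ μ ∈ spectrum ℂ (K.map (Complex.ofReal ·)), μ ≠ 1 → ‖μ‖ ≤ μ₂)
    (μ : ℂ)
    (hμ : μ ∈ spectrum ℂ (K.map (Complex.ofReal ·) - Matrix.of fun _ j => (π j : ℂ))) :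
    ‖μ‖ ≤ μ₂ := by
  classical
  rcases eq_or_ne μ 0 with rfl | hμ0
  · simpa using hμ₂nonneg
  set Kc : Matrix (Fin n) (Fin n) ℂ := K.map (Complex.ofReal ·) with hKc
  set E : Matrix (Fin n) (Fin n) ℂ := Matrix.of fun _ j => (π j : ℂ) with hE
  set B : Matrix (Fin n) (Fin n) ℂ := Kc - E with hB
  -- extract a left eigenvector
  have hdet : ((μ • (1 : Matrix (Fin n) (Fin n) ℂ) - B)ᵀ).det = 0 := by
    rw [Matrix.det_transpose]
    have hnu : ¬ IsUnit (μ • (1 : Matrix (Fin n) (Fin n) ℂ) - B) := by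
      rw [← Algebra.algebraMap_eq_smul_one]
      exact spectrum.mem_iff.mp hμ
    by_contra hne
    exact hnu ((Matrix.isUnit_iff_isUnit_det _).mpr (isUnit_iff_ne_zero.mpr hne))
  obtain ⟨v, hv0, hvE⟩ := (Matrix.exists_mulVec_eq_zero_iff).mpr hdet
  have heig : ∀ j, ∑ i, v i * B i j = μ * v j := by
    intro j
    have h1 : ∑ i, (μ • (1 : Matrix (Fin n) (Fin n) ℂ) - B) i j * v i = 0 := by
      have := congrFun hvE j
      simpa [Matrix.mulVec, dotProduct, Matrix.transpose_apply] using this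
    have h2 : ∑ i, (μ • (1 : Matrix (Fin n) (Fin n) ℂ) - B) i j * v i
        = μ * v j - ∑ i, v i * B i j := by
      simp [Matrix.sub_apply, Matrix.smul_apply, Matrix.one_apply, sub_mul, smul_eq_mul,
        Finset.sum_sub_distrib, ite_mul, mul_comm (B _ j)]
    rw [h2] at h1
    exact (sub_eq_zero.mp h1).symm
  -- row sums of B are zero
  have hKcrow : ∀ i, ∑ j, Kc i j = 1 := by
    intro i
    simp only [hKc, Matrix.map_apply]
    rw [← Complex.ofReal_sum, hKrow i, Complex.ofReal_one]
  have hBrow : ∀ i, ∑ j, B i j = 0 := by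
    intro i
    have h2 : ∑ j, E i j = 1 := by
      simp only [hE, Matrix.of_apply]
      rw [← Complex.ofReal_sum, hπsum, Complex.ofReal_one]
    simp [hB, Finset.sum_sub_distrib, hKcrow i, h2]
  have hvsum : ∑ i, v i = 0 := by
    have h0 : μ * ∑ j, v j = 0 := by
      rw [Finset.mul_sum]
      calc ∑ j, μ * v j = ∑ j, ∑ i, v i * B i j := by simp_rw [heig]
        _ = ∑ i, ∑ j, v i * B i j := Finset.sum_comm
        _ = 0 := by simp_rw [← Finset.mul_sum, hBrow, mul_zero, Finset.sum_const_zero]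
    exact (mul_eq_zero.mp h0).resolve_left hμ0
  have heigK : ∀ j, ∑ i, v i * Kc i j = μ * v j := by
    intro j
    have h1 := heig j
    have h2 : ∑ i, v i * B i j = (∑ i, v i * Kc i j) - (∑ i, v i) * (π j : ℂ) := by
      simp [hB, hE, mul_sub, Finset.sum_sub_distrib, Finset.sum_mul]
    rw [h2, hvsum, zero_mul, sub_zero] at h1
    exact h1
  -- μ ≠ 1 by uniqueness of the invariant vector
  have hμ1 : μ ≠ 1 := by
    rintro rfl
    apply hv0
    have hre : (fun i => (v i).re) = 0 := by
      refine perron_eq_zero K hK hKrow hconn _ (fun j => ?_) ?_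
      · have := congrArg Complex.re (heigK j)
        simpa [Complex.re_sum, Matrix.map_apply, hKc, Complex.mul_re] using this
      · have := congrArg Complex.re hvsum
        simpa [Complex.re_sum] using this
    have him : (fun i => (v i).im) = 0 := by
      refine perron_eq_zero K hK hKrow hconn _ (fun j => ?_) ?_
      · have := congrArg Complex.im (heigK j)
        simpa [Complex.im_sum, Matrix.map_apply, hKc, Complex.mul_im] using this
      · have := congrArg Complex.im hvsum
        simpa [Complex.im_sum] using this
    funext i
    have h1 := congrFun hre i
    have h2 := congrFun him i
    simp only [Pi.zero_apply] at h1 h2 ⊢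
    exact Complex.ext h1 h2
  -- μ is in the spectrum of Kc
  have hμK : μ ∈ spectrum ℂ Kc := by
    rw [spectrum.mem_iff, Algebra.algebraMap_eq_smul_one]
    intro hunit
    have hdetK : ((μ • (1 : Matrix (Fin n) (Fin n) ℂ) - Kc)ᵀ).det ≠ 0 := by
      rw [Matrix.det_transpose]
      exact IsUnit.ne_zero ((Matrix.isUnit_iff_isUnit_det _).mp hunit)
    apply hdetK
    rw [← Matrix.exists_mulVec_eq_zero_iff]
    refine ⟨v, hv0, ?_⟩
    funext j
    have h1 : ∑ i, (μ • (1 : Matrix (Fin n) (Fin n) ℂ) - Kc) i j * v i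
        = μ * v j - ∑ i, v i * Kc i j := by
      simp [Matrix.sub_apply, Matrix.smul_apply, Matrix.one_apply, sub_mul, smul_eq_mul,
        Finset.sum_sub_distrib, ite_mul, mul_comm (Kc _ j)]
    have : ((μ • (1 : Matrix (Fin n) (Fin n) ℂ) - Kc)ᵀ *ᵥ v) j
        = ∑ i, (μ • (1 : Matrix (Fin n) (Fin n) ℂ) - Kc) i j * v i := by
      simp [Matrix.mulVec, dotProduct, Matrix.transpose_apply]
    rw [this, h1, heigK j, sub_self]
    rfl
  exact hspec μ hμK hμ1

lemma pow_entry_bound {n : ℕ} (B : Matrix (Fin n) (Fin n) ℂ) (s r : ℝ)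
    (hs : 0 ≤ s) (hsr : s < r)
    (hspec : ∀ μ ∈ spectrum ℂ B, ‖μ‖ ≤ s) :
    ∃ C : ℝ, 0 < C ∧ ∀ (m : ℕ) (i j : Fin n), ‖(B ^ m) i j‖ ≤ C * r ^ m := by
  classical
  letI : NormedRing (Matrix (Fin n) (Fin n) ℂ) := Matrix.linftyOpNormedRing
  letI : NormedAlgebra ℂ (Matrix (Fin n) (Fin n) ℂ) := Matrix.linftyOpNormedAlgebra
  have hr : 0 < r := lt_of_le_of_lt hs hsr
  -- spectral radius bound
  have hrad : spectralRadius ℂ B ≤ ENNReal.ofReal s := by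
    simp only [spectralRadius]
    refine iSup₂_le fun μ hμ => ?_
    rw [← enorm_eq_nnnorm, ← ofReal_norm]
    exact ENNReal.ofReal_le_ofReal (hspec μ hμ)
  have hlt : spectralRadius ℂ B < ENNReal.ofReal r :=
    lt_of_le_of_lt hrad ((ENNReal.ofReal_lt_ofReal_iff hr).mpr hsr)
  have htend := spectrum.pow_nnnorm_pow_one_div_tendsto_nhds_spectralRadius B
  have hev : ∀ᶠ (m : ℕ) in Filter.atTop, (‖B ^ m‖₊ : ℝ≥0∞) ^ (1/(m:ℝ)) < ENNReal.ofReal r :=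
    htend.eventually_lt_const hlt
  obtain ⟨N, hN⟩ := Filter.eventually_atTop.mp hev
  -- for m ≥ max N 1, ‖B ^ m‖ ≤ r ^ m
  have hbig : ∀ m, N ≤ m → 1 ≤ m → ‖B ^ m‖ ≤ r ^ m := by
    intro m hm h1
    have h := hN m hm
    have hm0 : (m : ℝ) ≠ 0 := by positivity
    have h2 : ((‖B ^ m‖₊ : ℝ≥0∞) ^ (1/(m:ℝ))) ^ (m:ℝ) ≤ (ENNReal.ofReal r) ^ (m:ℝ) :=
      ENNReal.rpow_le_rpow h.le (by positivity)
    rw [← ENNReal.rpow_mul, one_div, inv_mul_cancel₀ hm0, ENNReal.rpow_one,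
      ENNReal.ofReal_rpow_of_pos hr, Real.rpow_natCast, ← enorm_eq_nnnorm, ← ofReal_norm] at h2
    exact (ENNReal.ofReal_le_ofReal_iff (by positivity)).mp h2
  have hentry : ∀ (M : Matrix (Fin n) (Fin n) ℂ) (i j : Fin n), ‖M i j‖ ≤ ‖M‖ := by
    intro M i j
    have h1 : ‖M i j‖₊ ≤ ‖M‖₊ := by
      rw [Matrix.linfty_opNNNorm_def]
      refine le_trans ?_ (Finset.le_sup (f := fun i => ∑ j, ‖M i j‖₊) (Finset.mem_univ i))
      exact Finset.single_le_sum (f := fun k => ‖M i k‖₊) (fun k _ => zero_le)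
        (Finset.mem_univ j)
    exact_mod_cast h1
  set C : ℝ := (∑ m ∈ Finset.range (N+1), ‖B ^ m‖ / r ^ m) + 1 with hC
  have hC1 : 1 ≤ C := by
    have : 0 ≤ ∑ m ∈ Finset.range (N+1), ‖B ^ m‖ / r ^ m :=
      Finset.sum_nonneg fun m _ => div_nonneg (norm_nonneg _) (by positivity)
    simp only [hC]
    linarith
  refine ⟨C, by linarith, fun m i j => ?_⟩
  rcases le_or_gt m N with hmN | hmN
  · have hterm : ‖B ^ m‖ / r ^ m ≤ C := by
      have h3 := Finset.single_le_sum (f := fun k => ‖B ^ k‖ / r ^ k)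
        (fun k _ => div_nonneg (norm_nonneg _) (by positivity))
        (Finset.mem_range.mpr (Nat.lt_succ_of_le hmN))
      simp only [hC]
      linarith
    calc ‖(B ^ m) i j‖ ≤ ‖B ^ m‖ := hentry _ i j
      _ = (‖B ^ m‖ / r ^ m) * r ^ m := by field_simp
      _ ≤ C * r ^ m := mul_le_mul_of_nonneg_right hterm (by positivity)
  · have h1m : 1 ≤ m := by omega
    calc ‖(B ^ m) i j‖ ≤ ‖B ^ m‖ := hentry _ i j
      _ ≤ r ^ m := hbig m hmN.le h1m
      _ ≤ C * r ^ m := le_mul_of_one_le_left (by positivity) hC1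

lemma vecMul_exp_eq {n : ℕ} (A : Matrix (Fin n) (Fin n) ℝ) (u : Fin n → ℝ) (j : Fin n) :
    Summable (fun m : ℕ => ((m.factorial : ℝ))⁻¹ * (u ᵥ* A ^ m) j) ∧
    (u ᵥ* NormedSpace.exp A) j = ∑' m : ℕ, ((m.factorial : ℝ))⁻¹ * (u ᵥ* A ^ m) j := by
  letI : NormedRing (Matrix (Fin n) (Fin n) ℝ) := Matrix.linftyOpNormedRing
  letI : NormedAlgebra ℝ (Matrix (Fin n) (Fin n) ℝ) := Matrix.linftyOpNormedAlgebra
  let φ₀ : Matrix (Fin n) (Fin n) ℝ →ₗ[ℝ] ℝ :=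
    { toFun := fun M => (u ᵥ* M) j
      map_add' := fun M N => by
        simp [Matrix.vecMul, dotProduct, Matrix.add_apply, mul_add,
          Finset.sum_add_distrib]
      map_smul' := fun c M => by
        simp [Matrix.vecMul, dotProduct, Matrix.smul_apply, Finset.mul_sum,
          smul_eq_mul, mul_left_comm] }
  let φ : Matrix (Fin n) (Fin n) ℝ →L[ℝ] ℝ := φ₀.toContinuousLinearMap
  have hφ : ∀ M, φ M = (u ᵥ* M) j := fun M => rfl
  have hsum : Summable (fun m : ℕ => ((m.factorial : ℝ))⁻¹ • A ^ m) :=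
    NormedSpace.expSeries_summable' A
  have himg : Summable (fun m : ℕ => φ (((m.factorial : ℝ))⁻¹ • A ^ m)) :=
    (hsum.hasSum.mapL φ).summable
  have heq : (u ᵥ* NormedSpace.exp A) j = ∑' m, φ (((m.factorial : ℝ))⁻¹ • A ^ m) := by
    rw [← hφ, NormedSpace.exp_eq_tsum ℝ]
    exact φ.map_tsum hsum
  simp only [map_smul, smul_eq_mul] at himg heq
  simp only [hφ] at himg heq
  exact ⟨himg, heq⟩

lemma exp_smul_one_mat {n : ℕ} (c : ℝ) :
    NormedSpace.exp (c • (1 : Matrix (Fin n) (Fin n) ℝ)) = Real.exp c • 1 := by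
  letI : NormedRing (Matrix (Fin n) (Fin n) ℝ) := Matrix.linftyOpNormedRing
  letI : NormedAlgebra ℝ (Matrix (Fin n) (Fin n) ℝ) := Matrix.linftyOpNormedAlgebra
  rw [NormedSpace.exp_eq_tsum ℝ]
  have h1 : ∀ m : ℕ, ((m.factorial : ℝ))⁻¹ • (c • (1 : Matrix (Fin n) (Fin n) ℝ)) ^ m
      = (((m.factorial : ℝ))⁻¹ * c ^ m) • (1 : Matrix (Fin n) (Fin n) ℝ) := by
    intro m
    rw [smul_pow, one_pow, smul_smul]
  simp_rw [h1]
  have hs : Summable (fun m : ℕ => ((m.factorial : ℝ))⁻¹ * c ^ m) := by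
    have := NormedSpace.expSeries_summable' (𝕂 := ℝ) (x := c)
    simpa [smul_eq_mul] using this
  rw [Summable.tsum_smul_const hs]
  congr 1
  rw [Real.exp_eq_exp_ℝ, NormedSpace.exp_eq_tsum ℝ]
  simp [smul_eq_mul]

set_option maxHeartbeats 2000000 in
/-- Exponential ergodicity of the continuous-time semigroup `ρ(t)ᵀ = ρ₀ᵀ e^{Qt}` for an
irreducible Q-matrix: `‖ρ(t) − π‖_{ℓ¹} ≤ C e^{(at/2)(|μ₂|−1)} ‖ρ₀‖_{ℓ¹}`, where `|μ₂| < 1`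
dominates the moduli of the non-unit eigenvalues of `K = Q/a + I`, `a > max_i(−Q_{ii})`. -/
theorem qmatrix_continuous_exponential_ergodicity {n : ℕ} (Q : Matrix (Fin n) (Fin n) ℝ)
    (hQoff : ∀ i j, i ≠ j → 0 ≤ Q i j)
    (hQrow : ∀ i, ∑ j, Q i j = 0)
    (hirr : ∀ i j : Fin n, Relation.ReflTransGen (fun a b => a ≠ b ∧ 0 < Q a b) i j)
    (π : Fin n → ℝ) (hπpos : ∀ i, 0 < π i) (hπsum : ∑ i, π i = 1)
    (hπinv : ∀ j, ∑ i, π i * Q i j = 0)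
    (a : ℝ) (ha : 0 < a) (hamax : ∀ i, -Q i i < a)
    (μ₂ : ℝ) (hμ₂nonneg : 0 ≤ μ₂) (hμ₂ : μ₂ < 1)
    (hspec : ∀ μ ∈ spectrum ℂ ((a⁻¹ • Q + 1).map (Complex.ofReal ·)), μ ≠ 1 → ‖μ‖ ≤ μ₂)
    (ρ₀ : Fin n → ℝ) (hρ₀nonneg : ∀ i, 0 ≤ ρ₀ i) (hρ₀sum : ∑ i, ρ₀ i = 1) :
    ∃ C : ℝ, 0 < C ∧ ∀ t ≥ (0:ℝ),
      ∑ j, |(∑ i, ρ₀ i * NormedSpace.exp (t • Q) i j) - π j| ≤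
        C * Real.exp (a * t / 2 * (μ₂ - 1)) * ∑ i, |ρ₀ i| := by
  classical
  have ha0 : a ≠ 0 := ne_of_gt ha
  set K : Matrix (Fin n) (Fin n) ℝ := a⁻¹ • Q + 1 with hKdef
  have hKentry : ∀ i j, K i j = a⁻¹ * Q i j + (if i = j then (1:ℝ) else 0) := by
    intro i j
    simp [hKdef, Matrix.add_apply, Matrix.smul_apply, Matrix.one_apply, smul_eq_mul]
  have hKnn : ∀ i j, 0 ≤ K i j := by
    intro i j
    rw [hKentry]
    rcases eq_or_ne i j with rfl | hij
    · have h1 : -a < Q i i := by have := hamax i; linarith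
      have h2 : a⁻¹ * (-a) ≤ a⁻¹ * Q i i :=
        mul_le_mul_of_nonneg_left h1.le (inv_nonneg.mpr ha.le)
      rw [if_pos rfl]
      have : a⁻¹ * (-a) = -1 := by field_simp
      linarith
    · rw [if_neg hij]
      have := hQoff i j hij
      positivity
  have hKrow : ∀ i, ∑ j, K i j = 1 := by
    intro i
    simp_rw [hKentry]
    rw [Finset.sum_add_distrib, ← Finset.mul_sum, hQrow i, mul_zero, zero_add]
    simp
  have hKconn : ∀ i j : Fin n, Relation.ReflTransGen (fun a b => a ≠ b ∧ 0 < K a b) i j := by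
    intro i j
    refine Relation.ReflTransGen.mono ?_ i j (hirr i j)
    rintro x y ⟨hxy, hQ⟩
    refine ⟨hxy, ?_⟩
    rw [hKentry, if_neg hxy, add_zero]
    positivity
  -- the deflated real matrix
  set Er : Matrix (Fin n) (Fin n) ℝ := Matrix.of fun _ j => π j with hErdef
  set Br : Matrix (Fin n) (Fin n) ℝ := K - Er with hBrdef
  -- spectrum bound for the complexification
  have hspecB : ∀ μ ∈ spectrum ℂ (K.map (Complex.ofReal ·) -
      Matrix.of fun _ j => (π j : ℂ)), ‖μ‖ ≤ μ₂ :=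
    fun μ hμ => deflated_spec K π hKnn hKrow hKconn hπsum μ₂ hμ₂nonneg hspec μ hμ
  set r : ℝ := (1 + μ₂) / 2 with hrdef
  have hμ₂r : μ₂ < r := by rw [hrdef]; linarith
  obtain ⟨C, hCpos, hCbound⟩ := pow_entry_bound
    (K.map (Complex.ofReal ·) - Matrix.of fun _ j => (π j : ℂ)) μ₂ r hμ₂nonneg hμ₂r hspecB
  -- entrywise bound on real powers
  have hmapB : Br.map (Complex.ofReal ·) =
      K.map (Complex.ofReal ·) - Matrix.of fun _ j => (π j : ℂ) := by
    funext i j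
    simp [hBrdef, Matrix.map_apply, Matrix.sub_apply, hErdef]
  have hBrpow : ∀ (m : ℕ) (i j : Fin n), |(Br ^ m) i j| ≤ C * r ^ m := by
    intro m i j
    have h1 : ((Br ^ m).map (Complex.ofReal ·)) = (Br.map (Complex.ofReal ·)) ^ m := by
      have := map_pow (Complex.ofRealHom.mapMatrix) Br m
      exact this
    have h2 := hCbound m i j
    rw [← hmapB, ← h1] at h2
    simpa [Matrix.map_apply, Complex.norm_real] using h2
  -- the centered vector
  set u : Fin n → ℝ := fun i => ρ₀ i - π i with hudef
  have husum : ∑ i, u i = 0 := by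
    simp only [hudef]
    rw [Finset.sum_sub_distrib, hρ₀sum, hπsum, sub_self]
  -- vecMul by K-powers equals vecMul by Br-powers
  have hBrrow : ∀ i, ∑ j, Br i j = 0 := by
    intro i
    simp only [hBrdef, Matrix.sub_apply, hErdef, Matrix.of_apply]
    rw [Finset.sum_sub_distrib, hKrow i, hπsum, sub_self]
  have hkey : ∀ m : ℕ, u ᵥ* K ^ m = u ᵥ* Br ^ m ∧ ∑ j, (u ᵥ* Br ^ m) j = 0 := by
    intro m
    induction m with
    | zero => simp [Matrix.vecMul_one, husum]
    | succ m ih =>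
      obtain ⟨ih1, ih2⟩ := ih
      have hstep : ∀ w : Fin n → ℝ, (∑ i, w i = 0) → w ᵥ* K = w ᵥ* Br := by
        intro w hw
        funext j
        have : (w ᵥ* Er) j = 0 := by
          simp only [Matrix.vecMul, dotProduct, hErdef, Matrix.of_apply]
          rw [← Finset.sum_mul, hw, zero_mul]
        have hsub : (w ᵥ* Br) j = (w ᵥ* K) j - (w ᵥ* Er) j := by
          simp [hBrdef, Matrix.vecMul, dotProduct, Matrix.sub_apply, mul_sub,
            Finset.sum_sub_distrib]
        rw [hsub, this, sub_zero]
      have hs2 : ∀ w : Fin n → ℝ, ∑ j, (w ᵥ* Br) j = 0 := by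
        intro w
        simp only [Matrix.vecMul, dotProduct]
        rw [Finset.sum_comm]
        simp_rw [← Finset.mul_sum]
        calc ∑ i, w i * ∑ j, Br i j = ∑ i, w i * 0 := by
              apply Finset.sum_congr rfl; intro i _; rw [hBrrow i]
          _ = 0 := by simp
      constructor
      · rw [pow_succ, pow_succ, ← Matrix.vecMul_vecMul, ← Matrix.vecMul_vecMul, ih1,
          hstep _ ih2]
      · rw [pow_succ, ← Matrix.vecMul_vecMul]
        exact hs2 _
  -- entry bound for u ᵥ* K^m
  set U : ℝ := ∑ i, |u i| with hUdef
  have hUnn : 0 ≤ U := Finset.sum_nonneg fun i _ => abs_nonneg _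
  have hvecbound : ∀ (m : ℕ) (j : Fin n), |(u ᵥ* K ^ m) j| ≤ C * r ^ m * U := by
    intro m j
    rw [(hkey m).1]
    have : (u ᵥ* Br ^ m) j = ∑ i, u i * (Br ^ m) i j := by
      simp [Matrix.vecMul, dotProduct]
    rw [this]
    calc |∑ i, u i * (Br ^ m) i j| ≤ ∑ i, |u i * (Br ^ m) i j| := Finset.abs_sum_le_sum_abs _ _
      _ ≤ ∑ i, |u i| * (C * r ^ m) := by
          refine Finset.sum_le_sum fun i _ => ?_
          rw [abs_mul]
          exact mul_le_mul_of_nonneg_left (hBrpow m i j) (abs_nonneg _)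
      _ = C * r ^ m * U := by rw [← Finset.sum_mul, hUdef, mul_comm]
  refine ⟨2 * n * C + 1, by positivity, fun t ht => ?_⟩
  -- decompose the exponential
  have hr0 : 0 < r := by rw [hrdef]; linarith
  have hdecomp : NormedSpace.exp (t • Q) =
      NormedSpace.exp ((t * a) • K) * (Real.exp (-(t * a)) • 1) := by
    have h1 : t • Q = (t * a) • K + (-(t * a)) • (1 : Matrix (Fin n) (Fin n) ℝ) := by
      rw [hKdef, smul_add, smul_smul]
      have : t * a * a⁻¹ = t := by field_simp
      rw [this, neg_smul, add_neg_cancel_right]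
    rw [h1, Matrix.exp_add_of_commute _ _ ((Commute.one_right _).smul_right _),
      exp_smul_one_mat]
  -- π is invariant
  have hπvec : π ᵥ* Q = 0 := by
    funext j
    simp only [Matrix.vecMul, dotProduct, Pi.zero_apply]
    exact hπinv j
  have hπexp : ∀ j, (π ᵥ* NormedSpace.exp (t • Q)) j = π j := by
    intro j
    obtain ⟨hs, he⟩ := vecMul_exp_eq (t • Q) π j
    rw [he]
    have hterm : ∀ m : ℕ, ((m.factorial : ℝ))⁻¹ * (π ᵥ* (t • Q) ^ m) j
        = if m = 0 then π j else 0 := by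
      intro m
      cases m with
      | zero => simp [Matrix.vecMul_one]
      | succ m =>
        have : π ᵥ* (t • Q) ^ (m + 1) = 0 := by
          rw [pow_succ', ← Matrix.vecMul_vecMul]
          have h2 : π ᵥ* (t • Q) = 0 := by
            funext k
            simp only [Matrix.vecMul, dotProduct, Matrix.smul_apply, smul_eq_mul,
              Pi.zero_apply]
            simp_rw [mul_left_comm]
            rw [← Finset.mul_sum, hπinv k, mul_zero]
          rw [h2, Matrix.zero_vecMul]
        rw [this]
        simp
    rw [tsum_congr hterm]
    rw [tsum_eq_single 0 (fun m hm => by rw [if_neg hm])]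
    simp
  -- ρ(t) − π = u ᵥ* exp(t•Q)
  have hrho : ∀ j, (∑ i, ρ₀ i * NormedSpace.exp (t • Q) i j) - π j
      = (u ᵥ* NormedSpace.exp (t • Q)) j := by
    intro j
    set M := NormedSpace.exp (t • Q) with hM
    have h1 : (∑ i, ρ₀ i * M i j) = (ρ₀ ᵥ* M) j := by
      simp [Matrix.vecMul, dotProduct]
    have h2 : (ρ₀ ᵥ* M) j = (u ᵥ* M) j + (π ᵥ* M) j := by
      simp only [Matrix.vecMul, dotProduct, hudef]
      rw [← Finset.sum_add_distrib]
      apply Finset.sum_congr rfl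
      intros; ring
    rw [h1, h2, hπexp j, add_sub_cancel_right]
  -- pointwise bound
  have hbound : ∀ j, |(u ᵥ* NormedSpace.exp (t • Q)) j|
      ≤ C * U * Real.exp (a * t / 2 * (μ₂ - 1)) := by
    intro j
    rw [hdecomp]
    have hmul : (u ᵥ* (NormedSpace.exp ((t * a) • K) * (Real.exp (-(t * a)) • 1))) j
        = Real.exp (-(t * a)) * (u ᵥ* NormedSpace.exp ((t * a) • K)) j := by
      rw [← Matrix.vecMul_vecMul]
      set w := u ᵥ* NormedSpace.exp ((t * a) • K)
      simp only [Matrix.vecMul, dotProduct, Matrix.smul_apply, Matrix.one_apply,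
        smul_eq_mul, mul_ite, mul_one, mul_zero]
      rw [Finset.sum_ite_eq' Finset.univ j (fun i => w i * Real.exp (-(t * a)))]
      simp [mul_comm]
    rw [hmul]
    obtain ⟨hs, he⟩ := vecMul_exp_eq ((t * a) • K) u j
    rw [he]
    have hsmulvec : ∀ (c : ℝ) (M : Matrix (Fin n) (Fin n) ℝ),
        (u ᵥ* (c • M)) j = c * (u ᵥ* M) j := by
      intro c M
      simp [Matrix.vecMul, dotProduct, Matrix.smul_apply, smul_eq_mul,
        Finset.mul_sum, mul_left_comm]
    have hta : 0 ≤ t * a := mul_nonneg ht ha.le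
    have hfg : ∀ m : ℕ, |((m.factorial : ℝ))⁻¹ * (u ᵥ* ((t * a) • K) ^ m) j|
        ≤ C * U * ((t * a) * r) ^ m / (m.factorial : ℝ) := by
      intro m
      have h1 : ((t * a) • K) ^ m = ((t * a) ^ m) • K ^ m := by rw [smul_pow]
      rw [h1, hsmulvec, abs_mul, abs_mul]
      have h2 : |((m.factorial : ℝ))⁻¹| = ((m.factorial : ℝ))⁻¹ := by
        rw [abs_of_nonneg]; positivity
      have h3 : |(t * a) ^ m| = (t * a) ^ m := by rw [abs_of_nonneg]; positivity
      rw [h2, h3]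
      have h4 := hvecbound m j
      calc ((m.factorial : ℝ))⁻¹ * ((t * a) ^ m * |(u ᵥ* K ^ m) j|)
          ≤ ((m.factorial : ℝ))⁻¹ * ((t * a) ^ m * (C * r ^ m * U)) := by
            refine mul_le_mul_of_nonneg_left (mul_le_mul_of_nonneg_left h4 (by positivity))
              (by positivity)
        _ = C * U * ((t * a) * r) ^ m / (m.factorial : ℝ) := by
            rw [mul_pow (t * a) r m, div_eq_mul_inv]; ring
    have hg : Summable (fun m : ℕ => C * U * ((t * a) * r) ^ m / (m.factorial : ℝ)) := by
      simp_rw [mul_div_assoc]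
      exact (Real.summable_pow_div_factorial _).mul_left _
    have hf : Summable (fun m : ℕ => |((m.factorial : ℝ))⁻¹ * (u ᵥ* ((t * a) • K) ^ m) j|) :=
      Summable.of_nonneg_of_le (fun m => abs_nonneg _) hfg hg
    have habs : |∑' m : ℕ, ((m.factorial : ℝ))⁻¹ * (u ᵥ* ((t * a) • K) ^ m) j|
        ≤ C * U * Real.exp ((t * a) * r) := by
      have hexp : Real.exp ((t * a) * r) = ∑' m : ℕ, ((t * a) * r) ^ m / (m.factorial : ℝ) := by
        rw [Real.exp_eq_exp_ℝ, NormedSpace.exp_eq_tsum_div]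
      calc |∑' m : ℕ, ((m.factorial : ℝ))⁻¹ * (u ᵥ* ((t * a) • K) ^ m) j|
          ≤ ∑' m : ℕ, |((m.factorial : ℝ))⁻¹ * (u ᵥ* ((t * a) • K) ^ m) j| := by
            exact norm_tsum_le_tsum_norm
              (f := fun m : ℕ => ((m.factorial : ℝ))⁻¹ * (u ᵥ* ((t * a) • K) ^ m) j)
              (by exact hf)
        _ ≤ ∑' m : ℕ, C * U * ((t * a) * r) ^ m / (m.factorial : ℝ) :=
            Summable.tsum_le_tsum hfg hf hg
        _ = C * U * Real.exp ((t * a) * r) := by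
            rw [hexp, ← tsum_mul_left]
            apply tsum_congr
            intro m
            rw [mul_div_assoc]
    rw [abs_mul, abs_of_pos (Real.exp_pos _)]
    calc Real.exp (-(t * a)) * |∑' m : ℕ, ((m.factorial : ℝ))⁻¹ * (u ᵥ* ((t * a) • K) ^ m) j|
        ≤ Real.exp (-(t * a)) * (C * U * Real.exp ((t * a) * r)) :=
          mul_le_mul_of_nonneg_left habs (Real.exp_pos _).le
      _ = C * U * (Real.exp (-(t * a)) * Real.exp ((t * a) * r)) := by ring
      _ = C * U * Real.exp (a * t / 2 * (μ₂ - 1)) := by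
          rw [← Real.exp_add]
          congr 1
          rw [hrdef]; ring
  -- final assembly
  have hU2 : U ≤ 2 := by
    have hterm : ∀ i, |u i| ≤ ρ₀ i + π i := by
      intro i
      have h1 : |u i| ≤ |ρ₀ i| + |π i| := by rw [hudef]; exact abs_sub _ _
      rw [abs_of_nonneg (hρ₀nonneg i), abs_of_nonneg (hπpos i).le] at h1
      exact h1
    calc U ≤ ∑ i, (ρ₀ i + π i) := Finset.sum_le_sum fun i _ => hterm i
      _ = 2 := by rw [Finset.sum_add_distrib, hρ₀sum, hπsum]; norm_num
  have hρabs : ∑ i, |ρ₀ i| = 1 := by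
    rw [← hρ₀sum]
    exact Finset.sum_congr rfl fun i _ => abs_of_nonneg (hρ₀nonneg i)
  have hE := Real.exp_pos (a * t / 2 * (μ₂ - 1))
  calc ∑ j, |(∑ i, ρ₀ i * NormedSpace.exp (t • Q) i j) - π j|
      = ∑ j, |(u ᵥ* NormedSpace.exp (t • Q)) j| := by
        apply Finset.sum_congr rfl
        intro j _
        rw [hrho j]
    _ ≤ ∑ _j : Fin n, C * U * Real.exp (a * t / 2 * (μ₂ - 1)) :=
        Finset.sum_le_sum fun j _ => hbound j
    _ = (n : ℝ) * (C * U * Real.exp (a * t / 2 * (μ₂ - 1))) := by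
        rw [Finset.sum_const, Finset.card_univ, Fintype.card_fin, nsmul_eq_mul]
    _ ≤ (2 * n * C + 1) * Real.exp (a * t / 2 * (μ₂ - 1)) := by
        have h1 : (n : ℝ) * (C * U) ≤ 2 * n * C := by
          have := mul_le_mul_of_nonneg_left hU2 (mul_nonneg (Nat.cast_nonneg n) hCpos.le)
          nlinarith
        nlinarith
    _ = (2 * n * C + 1) * Real.exp (a * t / 2 * (μ₂ - 1)) * ∑ i, |ρ₀ i| := by
        rw [hρabs, mul_one]
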